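/- Let μ_n = ⊗_{i=0}^n N(0,1) be the standard Gaussian product measure on ℝ^{n+1}. For every n and every real c > 0, μ_n({a : Σ_{i=0}^n C(n,i) a_i x^i > 0 for all x > c}) = μ_n({a : Σ_{i=0}^n C(n,i) a_i x^i > 0 for all x ∈ (0, 1/c)}). -/

import Mathlib

open MeasureTheory ProbabilityTheory

lemma key_sum (n : ℕ) (a : Fin (n + 1) → ℝ) (x : ℝ) (hx : 0 < x) :
    ∑ i : Fin (n + 1), (n.choose i : ℝ) * a i.rev * x ^ (i : ℕ) =
      x ^ n * ∑ i : Fin (n + 1), (n.choose i : ℝ) * a i * x⁻¹ ^ (i : ℕ) := by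
  rw [Finset.mul_sum]
  rw [← Equiv.sum_comp (Fin.revPerm : Equiv.Perm (Fin (n + 1)))
    (fun i => (n.choose i : ℝ) * a i.rev * x ^ (i : ℕ))]
  refine Finset.sum_congr rfl fun i _ => ?_
  have hle : (i : ℕ) ≤ n := Fin.is_le i
  have hrev : ((Fin.revPerm i : Fin (n + 1)) : ℕ) = n - i := by
    simp [Fin.revPerm, Fin.val_rev]
  have hrr : (Fin.revPerm i : Fin (n + 1)).rev = i := by
    simp [Fin.revPerm]
  rw [hrr, hrev, Nat.choose_symm hle]
  have hxpow : x ^ (n - (i : ℕ)) = x ^ n * x⁻¹ ^ (i : ℕ) := by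
    rw [inv_pow, ← div_eq_mul_inv, eq_div_iff (by positivity), ← pow_add,
      Nat.sub_add_cancel hle]
  rw [hxpow]; ring

theorem stmt_8 (n : ℕ) (c : ℝ) (hc : 0 < c) :
    (Measure.pi fun _ : Fin (n + 1) => gaussianReal 0 1)
        {a : Fin (n + 1) → ℝ | ∀ x : ℝ, c < x →
          0 < ∑ i : Fin (n + 1), (n.choose i : ℝ) * a i * x ^ (i : ℕ)} =
      (Measure.pi fun _ : Fin (n + 1) => gaussianReal 0 1)
        {a : Fin (n + 1) → ℝ | ∀ x : ℝ, 0 < x → x < 1 / c →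
          0 < ∑ i : Fin (n + 1), (n.choose i : ℝ) * a i * x ^ (i : ℕ)} := by
  set μ := (Measure.pi fun _ : Fin (n + 1) => gaussianReal 0 1)
  set T := MeasurableEquiv.piCongrLeft (fun _ : Fin (n + 1) => ℝ)
    (Fin.revPerm : Equiv.Perm (Fin (n + 1)))
  have hT : MeasurePreserving T μ μ :=
    measurePreserving_piCongrLeft (fun _ => gaussianReal 0 1) _
  have hTa : ∀ (a : Fin (n + 1) → ℝ) (i : Fin (n + 1)), T a i = a i.rev := by
    intro a i
    simp [T, MeasurableEquiv.piCongrLeft, Equiv.piCongrLeft_apply, eq_rec_constant,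
      Fin.revPerm_symm]
    exact eq_rec_constant _ _
  have hset : {a : Fin (n + 1) → ℝ | ∀ x : ℝ, c < x →
        0 < ∑ i : Fin (n + 1), (n.choose i : ℝ) * a i * x ^ (i : ℕ)} =
      T ⁻¹' {a : Fin (n + 1) → ℝ | ∀ x : ℝ, 0 < x → x < 1 / c →
        0 < ∑ i : Fin (n + 1), (n.choose i : ℝ) * a i * x ^ (i : ℕ)} := by
    ext a
    simp only [Set.mem_setOf_eq, Set.mem_preimage]
    constructor
    · intro h x hx0 hx1
      simp only [hTa]
      rw [key_sum n a x hx0]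
      have : c < x⁻¹ := by
        rw [lt_inv_comm₀ hc hx0]
        simpa [one_div] using hx1
      exact mul_pos (pow_pos hx0 n) (h _ this)
    · intro h x hx
      have hx0 : 0 < x := hc.trans hx
      have h1 : 0 < x⁻¹ := inv_pos.mpr hx0
      have h2 : x⁻¹ < 1 / c := by
        rw [one_div, inv_lt_inv₀ hx0 hc] at *
        exact hx
      have := h x⁻¹ h1 h2
      simp only [hTa] at this
      rw [key_sum n a x⁻¹ h1, inv_inv] at this
      have hp : (0:ℝ) < x⁻¹ ^ n := pow_pos h1 n
      nlinarith [this]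
  rw [hset]
  exact hT.measure_preimage_equiv _
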